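/- Let C be a perfect t-deletion binary code of length n with t < n. For any positive integers a, b, and c with c ≤ a < b ≤ n, Σ_{a ≤ r ≤ b+2t} #C_r ≥ (C(c+t−1, t)/C(c+b−a+3t−1, t)) · (2/C(n−1, t)) · Σ_{a ≤ p ≤ b} C(n−1, p+t−1). -/

import Mathlib

open Filter Finset

/-- The number of runs of a binary sequence (maximal blocks of equal consecutive symbols). -/
def runsCount (x : List Bool) : ℕ := (x.destutter (· ≠ ·)).length

/-- The deletion sphere `dS^t(x)`: all sequences obtained from `x` by deleting `t` symbols,
i.e. the sublists of `x` of length `x.length - t`. -/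
def delSphere (t : ℕ) (x : List Bool) : Set (List Bool) :=
  {y | y.Sublist x ∧ y.length = x.length - t}

/-- `dS^t(X)` for a set `X` of sequences. -/
def delSphereSet (t : ℕ) (X : Set (List Bool)) : Set (List Bool) :=
  ⋃ x ∈ X, delSphere t x

/-- A `t`-deletion code of length `n`: a set of binary sequences of length `n`
with pairwise disjoint deletion spheres. -/
def IsDeletionCode (t n : ℕ) (C : Set (List Bool)) : Prop :=
  (∀ c ∈ C, c.length = n) ∧
  ∀ c ∈ C, ∀ d ∈ C, c ≠ d → delSphere t c ∩ delSphere t d = ∅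

/-- A perfect `t`-deletion code of length `n`: the deletion spheres of codewords
cover all of `𝔹^{n-t}`. -/
def IsPerfectDeletionCode (t n : ℕ) (C : Set (List Bool)) : Prop :=
  IsDeletionCode t n C ∧ delSphereSet t C = {y : List Bool | y.length = n - t}

/-- `M^t(n)`: the maximum cardinality of a `t`-deletion code of length `n`. -/
noncomputable def maxDelCodeSize (t n : ℕ) : ℕ :=
  sSup {m : ℕ | ∃ C : Set (List Bool), IsDeletionCode t n C ∧ C.ncard = m}

/-! ### Auxiliary lemmas on `runsCount` -/

lemma rc_nil : runsCount [] = 0 := rfl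

lemma rc_singleton (a : Bool) : runsCount [a] = 1 := rfl

lemma rc_cons_cons_eq (a : Bool) (l : List Bool) :
    runsCount (a :: a :: l) = runsCount (a :: l) := by
  unfold runsCount
  rw [List.destutter_cons_cons, if_neg (by simp)]
  simp [List.destutter]

lemma rc_cons_cons_ne {a b : Bool} (h : a ≠ b) (l : List Bool) :
    runsCount (a :: b :: l) = 1 + runsCount (b :: l) := by
  unfold runsCount
  rw [List.destutter_cons_cons, if_pos h]
  simp [List.destutter]
  omega

lemma rc_cons_le (a : Bool) (l : List Bool) :
    runsCount l ≤ runsCount (a :: l) ∧ runsCount (a :: l) ≤ runsCount l + 1 := by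
  induction l generalizing a with
  | nil => simp [rc_nil, rc_singleton]
  | cons b l ih =>
    by_cases h : a = b
    · subst h; rw [rc_cons_cons_eq]; omega
    · rw [rc_cons_cons_ne h]; omega

lemma rc_pos {l : List Bool} (h : l ≠ []) : 1 ≤ runsCount l := by
  induction l with
  | nil => simp at h
  | cons a l ih =>
    cases l with
    | nil => simp [rc_singleton]
    | cons b l =>
      have := ih (by simp)
      by_cases hab : a = b
      · subst hab; rw [rc_cons_cons_eq]; omega
      · rw [rc_cons_cons_ne hab]; omega

lemma rc_sublist {y x : List Bool} (h : y.Sublist x) :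
    runsCount y ≤ runsCount x ∧ ∀ a, runsCount (a :: y) ≤ runsCount (a :: x) := by
  induction h with
  | slnil => simp
  | @cons l₁ l₂ a h ih =>
    have h2 := (rc_cons_le a l₂).1
    refine ⟨le_trans ih.1 h2, fun b => ?_⟩
    refine le_trans (ih.2 b) ?_
    by_cases hba : b = a
    · subst hba; rw [rc_cons_cons_eq]
    · rw [rc_cons_cons_ne hba]
      have h1 := (rc_cons_le b l₂).2
      omega
  | @cons_cons l₁ l₂ a h ih =>
    refine ⟨ih.2 a, fun b => ?_⟩
    by_cases hba : b = a
    · subst hba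
      rw [rc_cons_cons_eq, rc_cons_cons_eq]
      exact ih.2 b
    · rw [rc_cons_cons_ne hba, rc_cons_cons_ne hba]
      have := ih.2 a
      omega

lemma rc_sublist_le {y x : List Bool} (h : y.Sublist x) : runsCount y ≤ runsCount x :=
  (rc_sublist h).1

lemma rc_sublist_ge {y x : List Bool} (h : y.Sublist x) :
    runsCount x ≤ runsCount y + 2 * (x.length - y.length) ∧
      ∀ a, runsCount (a :: x) ≤ runsCount (a :: y) + 2 * (x.length - y.length) := by
  induction h with
  | slnil => simp
  | @cons l₁ l₂ a h ih =>
    have hlen := h.length_le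
    have h1 := ih.1
    have h2 := (rc_cons_le a l₂).2
    constructor
    · simp only [List.length_cons]; omega
    · intro b
      simp only [List.length_cons]
      by_cases hba : b = a
      · subst hba
        rw [rc_cons_cons_eq]
        have := ih.2 b
        omega
      · rw [rc_cons_cons_ne hba]
        have h3 := (rc_cons_le b l₁).1
        omega
  | @cons_cons l₁ l₂ a h ih =>
    have hlen := h.length_le
    constructor
    · have := ih.2 a; simp only [List.length_cons]; omega
    · intro b
      simp only [List.length_cons]
      by_cases hba : b = a
      · subst hba
        rw [rc_cons_cons_eq, rc_cons_cons_eq]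
        have := ih.2 b
        omega
      · rw [rc_cons_cons_ne hba, rc_cons_cons_ne hba]
        have := ih.2 a
        omega

lemma destutter_cons_dropWhile (b : Bool) (s : List Bool) :
    (b :: s).destutter (· ≠ ·) = b :: (s.dropWhile (· == b)).destutter (· ≠ ·) := by
  induction s with
  | nil => simp [List.destutter]
  | cons c s ih =>
    by_cases h : c = b
    · subst h
      rw [List.destutter_cons_cons, if_neg (by simp)]
      rw [List.dropWhile_cons, if_pos (by simp)]
      exact ih
    · rw [List.destutter_cons_cons, if_pos (Ne.symm h)]
      rw [List.dropWhile_cons, if_neg (by simpa using h)]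
      rfl

lemma rc_cons_dropWhile (b : Bool) (s : List Bool) :
    runsCount (b :: s) = 1 + runsCount (s.dropWhile (· == b)) := by
  unfold runsCount
  rw [destutter_cons_dropWhile]
  simp [Nat.add_comm]

/-! ### The deletion-sphere finset and its cardinality bound -/

def SF (x : List Bool) (t : ℕ) : Finset (List Bool) :=
  x.sublists.toFinset.filter (fun y => y.length + t = x.length)

lemma mem_SF {x y : List Bool} {t : ℕ} :
    y ∈ SF x t ↔ y.Sublist x ∧ y.length + t = x.length := by
  simp [SF, List.mem_sublists]

lemma SF_replicate_card (k t : ℕ) (b : Bool) :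
    (SF (List.replicate k b) t).card ≤ 1 := by
  apply Finset.card_le_one.2
  intro y1 h1 y2 h2
  rw [mem_SF] at h1 h2
  obtain ⟨n1, hn1, rfl⟩ := List.sublist_replicate_iff.1 h1.1
  obtain ⟨n2, hn2, rfl⟩ := List.sublist_replicate_iff.1 h2.1
  have := h1.2
  have := h2.2
  simp_all
  omega

lemma hockey (K t : ℕ) :
    ∑ s ∈ Finset.range (t + 1), (K + s).choose s = (K + t + 1).choose t := by
  induction t with
  | zero => simp
  | succ t ih =>
    rw [Finset.sum_range_succ, ih]
    have : K + (t + 1) + 1 = (K + t + 1) + 1 := by ring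
    rw [this, Nat.choose_succ_succ (K + t + 1) t]
    rfl

lemma SF_card_bound_aux : ∀ N : ℕ, ∀ x : List Bool, x.length ≤ N → x ≠ [] → ∀ t : ℕ,
    (SF x t).card ≤ (runsCount x + t - 1).choose t := by
  intro N
  induction N with
  | zero =>
    intro x hN hx t
    cases x with
    | nil => simp at hx
    | cons a s => simp at hN
  | succ N ih =>
    rintro ⟨⟩ hN hx t
    · simp at hx
    case cons b s =>
    set x' := s.dropWhile (· == b) with hx'def
    have hxx' : (b :: s).dropWhile (· == b) = x' := by
      rw [List.dropWhile_cons, if_pos (by simp)]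
    by_cases hx'nil : x' = []
    · -- all symbols equal b
      have hall : ∀ c ∈ b :: s, c = b := by
        intro c hc
        rcases List.mem_cons.1 hc with rfl | hc
        · rfl
        · have := List.dropWhile_eq_nil_iff.1 hx'nil c hc
          simpa using this
      obtain ⟨m, hm⟩ : ∃ m, b :: s = List.replicate m b :=
        ⟨_, List.eq_replicate_of_mem hall⟩
      have h1 : (SF (b :: s) t).card ≤ 1 := by
        rw [hm]; exact SF_replicate_card _ _ _
      refine le_trans h1 ?_
      have hrc : 1 ≤ runsCount (b :: s) := rc_pos (by simp)
      exact Nat.choose_pos (by omega)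
    · -- main case
      have hT : (b :: s).takeWhile (· == b) =
          List.replicate ((b :: s).takeWhile (· == b)).length b :=
        List.eq_replicate_of_mem (fun c hc => by simpa using List.mem_takeWhile_imp hc)
      set k := ((b :: s).takeWhile (· == b)).length with hkdef
      have hsplit : List.replicate k b ++ x' = b :: s := by
        rw [← hT, ← hxx', List.takeWhile_append_dropWhile]
      have hk_pos : 1 ≤ k := by
        rw [hkdef, List.takeWhile_cons, if_pos (by simp)]
        simp
      have hlenx : (b :: s).length = k + x'.length := by
        rw [← hsplit]; simp
      have hx'len : x'.length ≤ N := by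
        have : (b :: s).length = s.length + 1 := by simp
        omega
      have hrc : runsCount (b :: s) = 1 + runsCount x' := rc_cons_dropWhile b s
      have hr' : 1 ≤ runsCount x' := rc_pos hx'nil
      -- the covering subset
      have hsubset : SF (b :: s) t ⊆ (Finset.range (t + 1)).biUnion
          (fun d => (SF x' (t - d)).image (fun z => List.replicate (k - d) b ++ z)) := by
        intro y hy
        rw [mem_SF] at hy
        obtain ⟨hysub, hylen⟩ := hy
        have hyrep : y.takeWhile (· == b) =
            List.replicate (y.takeWhile (· == b)).length b :=
          List.eq_replicate_of_mem (fun c hc => by simpa using List.mem_takeWhile_imp hc)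
        set m := (y.takeWhile (· == b)).length with hmdef
        have hysplit : List.replicate m b ++ y.dropWhile (· == b) = y := by
          rw [← hyrep, List.takeWhile_append_dropWhile]
        have hmy : m + (y.dropWhile (· == b)).length = y.length := by
          conv_rhs => rw [← hysplit]
          simp
        set j := min m k with hjdef
        have hytake : y.take j = List.replicate j b := by
          conv_lhs => rw [← hysplit]
          have : List.replicate m b = List.replicate j b ++ List.replicate (m - j) b := by
            rw [← List.replicate_add]
            congr 1
            omega
          rw [this, List.append_assoc]
          exact List.take_left' (by simp)
        set z := y.drop j with hzdef
        have hyz : y = List.replicate j b ++ z := by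
          rw [← hytake, hzdef, List.take_append_drop]
        have hzlen : j + z.length = y.length := by
          rw [hyz]; simp
        have hzsub : z.Sublist x' := by
          rcases le_or_gt k m with hkm | hmk
          · have hj : j = k := min_eq_right hkm
            have hss : (List.replicate k b ++ z).Sublist (List.replicate k b ++ x') := by
              rw [hsplit, ← hj, ← hyz]; exact hysub
            exact (List.append_sublist_append_left _).1 hss
          · have hj : j = m := min_eq_left hmk.le
            have hzdrop : z = y.dropWhile (· == b) := by
              rw [hzdef, hj]
              conv_lhs => rw [← hysplit]
              exact List.drop_left' (by simp)
            have hzx : z.Sublist (List.replicate k b ++ x') := by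
              rw [hsplit]
              exact (List.drop_sublist j y).trans hysub
            obtain ⟨z₁, z₂, hzeq, hz₁, hz₂⟩ := List.sublist_append_iff.1 hzx
            obtain ⟨n1, hn1, rfl⟩ := List.sublist_replicate_iff.1 hz₁
            cases n1 with
            | zero => simpa [hzeq] using hz₂
            | succ n1 =>
              exfalso
              have hhd := List.head?_dropWhile_not (· == b) y
              rw [← hzdrop, hzeq] at hhd
              simp [List.replicate_succ] at hhd
        have hzx'len : z.length ≤ x'.length := hzsub.length_le
        have hd : k - j ≤ t := by
          simp only [List.length_cons] at hylen hlenx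
          omega
        rw [Finset.mem_biUnion]
        refine ⟨k - j, Finset.mem_range.2 (by omega), ?_⟩
        rw [Finset.mem_image]
        refine ⟨z, mem_SF.2 ⟨hzsub, by
          simp only [List.length_cons] at hylen hlenx; omega⟩, ?_⟩
        rw [Nat.sub_sub_self (by omega : j ≤ k), ← hyz]
      -- counting
      calc (SF (b :: s) t).card
          ≤ ((Finset.range (t + 1)).biUnion
              (fun d => (SF x' (t - d)).image (fun z => List.replicate (k - d) b ++ z))).card :=
            Finset.card_le_card hsubset
        _ ≤ ∑ d ∈ Finset.range (t + 1),
              ((SF x' (t - d)).image (fun z => List.replicate (k - d) b ++ z)).card :=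
            Finset.card_biUnion_le
        _ ≤ ∑ d ∈ Finset.range (t + 1), (SF x' (t - d)).card :=
            Finset.sum_le_sum (fun d _ => Finset.card_image_le)
        _ ≤ ∑ d ∈ Finset.range (t + 1), ((runsCount x' - 1) + (t - d)).choose (t - d) := by
            refine Finset.sum_le_sum (fun d _ => ?_)
            have := ih x' hx'len hx'nil (t - d)
            have heq : runsCount x' + (t - d) - 1 = (runsCount x' - 1) + (t - d) := by omega
            rwa [heq] at this
        _ = ∑ s' ∈ Finset.range (t + 1), ((runsCount x' - 1) + s').choose s' := by
            have := Finset.sum_range_reflect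
              (fun s' => ((runsCount x' - 1) + s').choose s') (t + 1)
            simpa using this
        _ = ((runsCount x' - 1) + t + 1).choose t := hockey _ _
        _ = (runsCount (b :: s) + t - 1).choose t := by congr 1; omega

lemma SF_card_bound {x : List Bool} (hx : x ≠ []) (t : ℕ) :
    (SF x t).card ≤ (runsCount x + t - 1).choose t :=
  SF_card_bound_aux x.length x le_rfl hx t

/-! ### Binomial product inequalities -/

lemma asc_prod_ineq (u w d t : ℕ) :
    (u + 1).ascFactorial t * (u + w + d + 1).ascFactorial t ≤
      (u + d + 1).ascFactorial t * (u + w + 1).ascFactorial t := by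
  induction t with
  | zero => simp
  | succ t ih =>
    rw [Nat.ascFactorial_succ, Nat.ascFactorial_succ, Nat.ascFactorial_succ,
      Nat.ascFactorial_succ]
    have h1 : (u + 1 + t) * (u + w + d + 1 + t) ≤ (u + d + 1 + t) * (u + w + 1 + t) := by
      nlinarith
    calc (u + 1 + t) * (u + 1).ascFactorial t *
          ((u + w + d + 1 + t) * (u + w + d + 1).ascFactorial t)
        = ((u + 1 + t) * (u + w + d + 1 + t)) *
            ((u + 1).ascFactorial t * (u + w + d + 1).ascFactorial t) := by ring
      _ ≤ ((u + d + 1 + t) * (u + w + 1 + t)) *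
            ((u + d + 1).ascFactorial t * (u + w + 1).ascFactorial t) :=
          Nat.mul_le_mul h1 ih
      _ = (u + d + 1 + t) * (u + d + 1).ascFactorial t *
            ((u + w + 1 + t) * (u + w + 1).ascFactorial t) := by ring

lemma choose_prod_ineq (t u w d : ℕ) :
    (t + u).choose t * (t + u + w + d).choose t ≤
      (t + u + d).choose t * (t + u + w).choose t := by
  have key := asc_prod_ineq u w d t
  rw [Nat.ascFactorial_eq_factorial_mul_choose, Nat.ascFactorial_eq_factorial_mul_choose,
    Nat.ascFactorial_eq_factorial_mul_choose, Nat.ascFactorial_eq_factorial_mul_choose] at key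
  have heq1 : u + t = t + u := by ring
  have heq2 : u + w + d + t = t + u + w + d := by ring
  have heq3 : u + d + t = t + u + d := by ring
  have heq4 : u + w + t = t + u + w := by ring
  rw [heq1, heq2, heq3, heq4] at key
  have hfac : 0 < t.factorial * t.factorial :=
    Nat.mul_pos t.factorial_pos t.factorial_pos
  apply Nat.le_of_mul_le_mul_left _ hfac
  calc t.factorial * t.factorial * ((t + u).choose t * (t + u + w + d).choose t)
      = t.factorial * (t + u).choose t * (t.factorial * (t + u + w + d).choose t) := by ring
    _ ≤ t.factorial * (t + u + d).choose t * (t.factorial * (t + u + w).choose t) := key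
    _ = t.factorial * t.factorial * ((t + u + d).choose t * (t + u + w).choose t) := by ring

/-! ### Generating sequences with a prescribed number of runs -/

def fromDiffs : Bool → List Bool → List Bool
  | b, [] => [b]
  | b, d :: ds => b :: fromDiffs (xor d b) ds

lemma fromDiffs_cons_head (b : Bool) (ds : List Bool) :
    ∃ tl, fromDiffs b ds = b :: tl := by
  cases ds with
  | nil => exact ⟨[], rfl⟩
  | cons d ds => exact ⟨_, rfl⟩

lemma fromDiffs_length (ds : List Bool) : ∀ b, (fromDiffs b ds).length = ds.length + 1 := by
  induction ds with
  | nil => intro b; rfl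
  | cons d ds ih => intro b; simp [fromDiffs, ih]

lemma fromDiffs_runs (ds : List Bool) : ∀ b, runsCount (fromDiffs b ds) = 1 + ds.count true := by
  induction ds with
  | nil => intro b; simp [fromDiffs, rc_singleton]
  | cons d ds ih =>
    intro b
    have h0 : fromDiffs b (d :: ds) = b :: fromDiffs (xor d b) ds := rfl
    cases d with
    | false =>
      obtain ⟨tl, htl⟩ := fromDiffs_cons_head (xor false b) ds
      rw [h0, htl]
      simp only [Bool.false_xor] at htl ⊢
      rw [rc_cons_cons_eq, ← htl, ih b]
      simp [List.count_cons]
    | true =>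
      obtain ⟨tl, htl⟩ := fromDiffs_cons_head (xor true b) ds
      rw [h0, htl]
      simp only [Bool.true_xor] at htl ⊢
      rw [rc_cons_cons_ne (by simp) tl, ← htl, ih (!b)]
      simp [List.count_cons]
      omega

lemma fromDiffs_inj : ∀ (ds ds' : List Bool) (b b' : Bool),
    fromDiffs b ds = fromDiffs b' ds' → b = b' ∧ ds = ds' := by
  intro ds
  induction ds with
  | nil =>
    intro ds' b b' h
    cases ds' with
    | nil => simp [fromDiffs] at h; exact ⟨h, rfl⟩
    | cons d' ds' =>
      exfalso
      have := congrArg List.length h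
      rw [fromDiffs_length, fromDiffs_length] at this
      simp at this
  | cons d ds ih =>
    intro ds' b b' h
    cases ds' with
    | nil =>
      exfalso
      have := congrArg List.length h
      rw [fromDiffs_length, fromDiffs_length] at this
      simp at this
    | cons d' ds' =>
      have h0 : fromDiffs b (d :: ds) = b :: fromDiffs (xor d b) ds := rfl
      have h0' : fromDiffs b' (d' :: ds') = b' :: fromDiffs (xor d' b') ds' := rfl
      rw [h0, h0'] at h
      obtain ⟨hb, htail⟩ := List.cons_eq_cons.1 h
      subst hb
      obtain ⟨hx, hds⟩ := ih ds' (xor d b) (xor d' b) htail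
      have : d = d' := by
        cases d <;> cases d' <;> simp_all
      exact ⟨rfl, by rw [this, hds]⟩

lemma cnt_succ (S : Finset ℕ) (i : ℕ) :
    (S.filter (· < i + 1)).card = (S.filter (· < i)).card + (if i ∈ S then 1 else 0) := by
  classical
  have hsplit : S.filter (· < i + 1) = S.filter (· < i) ∪ S.filter (· = i) := by
    ext x
    simp only [Finset.mem_filter, Finset.mem_union]
    constructor
    · rintro ⟨hx, hlt⟩
      rcases Nat.lt_succ_iff_lt_or_eq.1 hlt with h | h
      · exact Or.inl ⟨hx, h⟩
      · exact Or.inr ⟨hx, h⟩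
    · rintro (⟨hx, h⟩ | ⟨hx, h⟩)
      · exact ⟨hx, by omega⟩
      · exact ⟨hx, by omega⟩
  rw [hsplit, Finset.card_union_of_disjoint]
  · congr 1
    rw [Finset.filter_eq']
    split <;> simp
  · rw [Finset.disjoint_left]
    intro x hx hy
    simp only [Finset.mem_filter] at hx hy
    omega

lemma count_map_range (S : Finset ℕ) : ∀ L : ℕ,
    ((List.range L).map (fun i => decide (i ∈ S))).count true = (S.filter (· < L)).card := by
  intro L
  induction L with
  | zero =>
    have : S.filter (· < 0) = ∅ := Finset.filter_false_of_mem (by intros; omega)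
    simp [this]
  | succ L ih =>
    rw [List.range_succ, List.map_append, List.count_append, ih, cnt_succ]
    congr 1
    by_cases h : L ∈ S <;> simp [h, List.count_cons]

def allLists (m : ℕ) : Finset (List Bool) :=
  (Finset.univ : Finset (Fin m → Bool)).image List.ofFn

lemma mem_allLists {m : ℕ} {y : List Bool} : y ∈ allLists m ↔ y.length = m := by
  constructor
  · intro hy
    obtain ⟨f, _, rfl⟩ := Finset.mem_image.1 hy
    simp
  · intro h
    subst h
    exact Finset.mem_image.2 ⟨y.get, Finset.mem_univ _, List.ofFn_get y⟩

lemma Yp_card_lower (m p : ℕ) (hm : 1 ≤ m) (hp : 1 ≤ p) :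
    2 * (m - 1).choose (p - 1) ≤ ((allLists m).filter (fun y => runsCount y = p)).card := by
  classical
  have hcard : ((Finset.univ : Finset Bool) ×ˢ
      ((Finset.range (m - 1)).powersetCard (p - 1))).card = 2 * (m - 1).choose (p - 1) := by
    rw [Finset.card_product, Finset.card_powersetCard, Finset.card_range]
    simp
  rw [← hcard]
  apply Finset.card_le_card_of_injOn
    (fun q => fromDiffs q.1 ((List.range (m - 1)).map (fun i => decide (i ∈ q.2))))
  · rintro ⟨b, S⟩ hq
    simp only [Finset.mem_coe, Finset.mem_product, Finset.mem_powersetCard] at hq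
    have hSsub := hq.2.1
    have hScard := hq.2.2
    rw [Finset.mem_coe, Finset.mem_filter]
    constructor
    · rw [mem_allLists, fromDiffs_length]
      simp
      omega
    · rw [fromDiffs_runs, count_map_range]
      have : S.filter (· < m - 1) = S := by
        apply Finset.filter_true_of_mem
        intro x hx
        exact Finset.mem_range.1 (hSsub hx)
      rw [this, hScard]
      omega
  · rintro ⟨b, S⟩ hq ⟨b', S'⟩ hq' heq
    simp only [Finset.mem_coe, Finset.mem_product, Finset.mem_powersetCard] at hq hq'
    obtain ⟨hb, hmap⟩ := fromDiffs_inj _ _ _ _ heq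
    have hSS : S = S' := by
      ext x
      by_cases hx : x < m - 1
      · have := congrArg (fun l => l[x]?) hmap
        simp only [List.getElem?_map] at this
        rw [List.getElem?_range hx] at this
        simp at this
        exact this
      · constructor
        · intro hmem
          exact absurd (Finset.mem_range.1 (hq.2.1 hmem)) hx
        · intro hmem
          exact absurd (Finset.mem_range.1 (hq'.2.1 hmem)) hx
    rw [Prod.ext_iff]
    exact ⟨hb, hSS⟩

/-- Lower bound on the number of codewords of a perfect `t`-deletion code
with runs in `[a, b+2t]`. -/
theorem perfect_code_runs_card_lower_bound (t n : ℕ) (ht : 0 < t) (htn : t < n)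
    (C : Set (List Bool)) (hC : IsPerfectDeletionCode t n C)
    (a b c : ℕ) (hc : 0 < c) (hca : c ≤ a) (hab : a < b) (hb : b ≤ n) :
    (((c + t - 1).choose t : ℝ) / ((c + b - a + 3 * t - 1).choose t : ℝ)) *
        (2 / ((n - 1).choose t : ℝ)) *
        ∑ p ∈ Finset.Icc a b, ((n - 1).choose (p + t - 1) : ℝ) ≤
      ∑ r ∈ Finset.Icc a (b + 2 * t),
        (({x ∈ C | runsCount x = r} : Set (List Bool)).ncard : ℝ) := by
  classical
  obtain ⟨⟨hClen, -⟩, hCperf⟩ := hC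
  -- C is finite
  have hCsub : C ⊆ ↑(allLists n) := fun x hx => mem_allLists.2 (hClen x hx)
  have hCfin : C.Finite := Set.Finite.subset (allLists n).finite_toSet hCsub
  set Cfin := hCfin.toFinset with hCfin_def
  have hmemCfin : ∀ x, x ∈ Cfin ↔ x ∈ C := fun x => hCfin.mem_toFinset
  set C' := Cfin.filter (fun x => runsCount x ∈ Finset.Icc a (b + 2 * t)) with hC'def
  set m := n - t with hmdef
  have hm1 : 1 ≤ m := by omega
  set Yfin := (allLists m).filter (fun y => runsCount y ∈ Finset.Icc a b) with hYdef
  -- covering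
  have hcover : Yfin ⊆ C'.biUnion (fun x => SF x t) := by
    intro y hy
    rw [hYdef, Finset.mem_filter, mem_allLists, Finset.mem_Icc] at hy
    obtain ⟨hylen, hya, hyb⟩ := hy
    have hymem : y ∈ delSphereSet t C := by
      rw [hCperf]
      exact hylen
    obtain ⟨x, hxC, hyx⟩ := Set.mem_iUnion₂.1 hymem
    obtain ⟨hsub, hlen⟩ := hyx
    have hxlen : x.length = n := hClen x hxC
    have hxne : x ≠ [] := by
      intro hx
      rw [hx] at hxlen
      simp at hxlen
      omega
    have hr1 : runsCount y ≤ runsCount x := rc_sublist_le hsub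
    have hr2 : runsCount x ≤ runsCount y + 2 * (x.length - y.length) := (rc_sublist_ge hsub).1
    rw [Finset.mem_biUnion]
    refine ⟨x, ?_, ?_⟩
    · rw [hC'def, Finset.mem_filter, hmemCfin, Finset.mem_Icc]
      refine ⟨hxC, by omega, by omega⟩
    · rw [mem_SF]
      exact ⟨hsub, by omega⟩
  -- upper count
  have hupper : Yfin.card ≤ C'.card * (b + 3 * t - 1).choose t := by
    calc Yfin.card ≤ (C'.biUnion (fun x => SF x t)).card := Finset.card_le_card hcover
      _ ≤ ∑ x ∈ C', (SF x t).card := Finset.card_biUnion_le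
      _ ≤ ∑ x ∈ C', (b + 3 * t - 1).choose t := by
          refine Finset.sum_le_sum (fun x hx => ?_)
          rw [hC'def, Finset.mem_filter, hmemCfin, Finset.mem_Icc] at hx
          obtain ⟨hxC, hxa, hxb⟩ := hx
          have hxlen : x.length = n := hClen x hxC
          have hxne : x ≠ [] := by
            intro h
            rw [h] at hxlen
            simp at hxlen
            omega
          refine le_trans (SF_card_bound hxne t) ?_
          exact Nat.choose_le_choose t (by omega)
      _ = C'.card * (b + 3 * t - 1).choose t := by
          rw [Finset.sum_const, smul_eq_mul]
  -- lower count
  have hlower : ∑ p ∈ Finset.Icc a b, 2 * (n - t - 1).choose (p - 1) ≤ Yfin.card := by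
    have hsub : (Finset.Icc a b).biUnion
        (fun p => (allLists m).filter (fun y => runsCount y = p)) ⊆ Yfin := by
      intro y hy
      rw [Finset.mem_biUnion] at hy
      obtain ⟨p, hp, hyp⟩ := hy
      rw [Finset.mem_filter] at hyp
      rw [hYdef, Finset.mem_filter]
      refine ⟨hyp.1, ?_⟩
      rw [Finset.mem_Icc] at hp ⊢
      omega
    have hdisj : ∀ p₁ ∈ Finset.Icc a b, ∀ p₂ ∈ Finset.Icc a b, p₁ ≠ p₂ →
        Disjoint ((allLists m).filter (fun y => runsCount y = p₁))
          ((allLists m).filter (fun y => runsCount y = p₂)) := by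
      intro p₁ _ p₂ _ hne
      rw [Finset.disjoint_left]
      intro y hy1 hy2
      rw [Finset.mem_filter] at hy1 hy2
      exact hne (hy1.2 ▸ hy2.2 ▸ rfl)
    calc ∑ p ∈ Finset.Icc a b, 2 * (n - t - 1).choose (p - 1)
        = ∑ p ∈ Finset.Icc a b, 2 * (m - 1).choose (p - 1) := by rfl
      _ ≤ ∑ p ∈ Finset.Icc a b, ((allLists m).filter (fun y => runsCount y = p)).card := by
          refine Finset.sum_le_sum (fun p hp => ?_)
          rw [Finset.mem_Icc] at hp
          exact Yp_card_lower m p hm1 (by omega)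
      _ = ((Finset.Icc a b).biUnion
            (fun p => (allLists m).filter (fun y => runsCount y = p))).card :=
          (Finset.card_biUnion hdisj).symm
      _ ≤ Yfin.card := Finset.card_le_card hsub
  -- RHS sum equals C'.card
  have hRHS : ∑ r ∈ Finset.Icc a (b + 2 * t),
      (({x ∈ C | runsCount x = r} : Set (List Bool)).ncard : ℝ) = (C'.card : ℝ) := by
    have hfib : C'.card = ∑ r ∈ Finset.Icc a (b + 2 * t),
        (C'.filter (fun x => runsCount x = r)).card :=
      Finset.card_eq_sum_card_fiberwise (fun x hx => by
        rw [hC'def, Finset.mem_coe, Finset.mem_filter] at hx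
        exact hx.2)
    have hfilter : ∀ r ∈ Finset.Icc a (b + 2 * t),
        ({x ∈ C | runsCount x = r} : Set (List Bool)).ncard =
          (C'.filter (fun x => runsCount x = r)).card := by
      intro r hr
      have hseteq : ({x ∈ C | runsCount x = r} : Set (List Bool)) =
          ↑(C'.filter (fun x => runsCount x = r)) := by
        ext x
        simp only [Set.mem_setOf_eq, Finset.coe_filter, hC'def, Finset.mem_filter, hmemCfin]
        constructor
        · rintro ⟨hxC, hxr⟩
          exact ⟨⟨hxC, by rw [hxr]; exact hr⟩, hxr⟩
        · rintro ⟨⟨hxC, -⟩, hxr⟩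
          exact ⟨hxC, hxr⟩
      rw [hseteq, Set.ncard_coe_finset]
    rw [Finset.sum_congr rfl (fun r hr => by rw [hfilter r hr]), hfib]
    push_cast
    rfl
  rw [hRHS]
  -- per-term binomial inequality
  have hPT : ∀ p ∈ Finset.Icc a b,
      (c + t - 1).choose t * (b + 3 * t - 1).choose t * (n - 1).choose (p + t - 1) ≤
        (c + b - a + 3 * t - 1).choose t * (n - 1).choose t * (n - t - 1).choose (p - 1) := by
    intro p hp
    rw [Finset.mem_Icc] at hp
    obtain ⟨hpa, hpb⟩ := hp
    by_cases hcase : p + t - 1 ≤ n - 1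
    · have hident : (n - 1).choose (p + t - 1) * (p + t - 1).choose t =
          (n - 1).choose t * (n - t - 1).choose (p - 1) := by
        have h0 := Nat.choose_mul (n := n - 1) (k := p + t - 1) (s := t) (by omega)
        have e : n - 1 - t = n - t - 1 := by omega
        have e' : p + t - 1 - t = p - 1 := by omega
        rw [h0, e, e']
      have hKPL : (c + t - 1).choose t * (b + 3 * t - 1).choose t ≤
          (c + b - a + 3 * t - 1).choose t * (p + t - 1).choose t := by
        have step2 : (c + t - 1).choose t * (b + 3 * t - 1).choose t ≤
            (c + b - a + 3 * t - 1).choose t * (a + t - 1).choose t := by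
          have h := choose_prod_ineq t (c - 1) (a - c) (b - a + 2 * t)
          have e1 : t + (c - 1) = c + t - 1 := by omega
          have e2 : t + (c - 1) + (a - c) + (b - a + 2 * t) = b + 3 * t - 1 := by omega
          have e3 : t + (c - 1) + (b - a + 2 * t) = c + b - a + 3 * t - 1 := by omega
          have e4 : t + (c - 1) + (a - c) = a + t - 1 := by omega
          rwa [e2, e3, e4, e1] at h
        refine le_trans step2 ?_
        exact Nat.mul_le_mul_left _ (Nat.choose_le_choose t (by omega))
      calc (c + t - 1).choose t * (b + 3 * t - 1).choose t * (n - 1).choose (p + t - 1)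
          ≤ (c + b - a + 3 * t - 1).choose t * (p + t - 1).choose t *
              (n - 1).choose (p + t - 1) := Nat.mul_le_mul_right _ hKPL
        _ = (c + b - a + 3 * t - 1).choose t *
              ((n - 1).choose (p + t - 1) * (p + t - 1).choose t) := by ring
        _ = (c + b - a + 3 * t - 1).choose t *
              ((n - 1).choose t * (n - t - 1).choose (p - 1)) := by rw [hident]
        _ = (c + b - a + 3 * t - 1).choose t * (n - 1).choose t *
              (n - t - 1).choose (p - 1) := by ring
    · have : (n - 1).choose (p + t - 1) = 0 := Nat.choose_eq_zero_of_lt (by omega)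
      rw [this]
      simp
  -- assemble the natural-number inequality
  set C1 := (c + t - 1).choose t with hC1
  set C2 := (c + b - a + 3 * t - 1).choose t with hC2
  set C3 := (n - 1).choose t with hC3
  set C4 := (b + 3 * t - 1).choose t with hC4
  set S := ∑ p ∈ Finset.Icc a b, (n - 1).choose (p + t - 1) with hS
  set E := ∑ p ∈ Finset.Icc a b, (n - t - 1).choose (p - 1) with hE
  have hI : C1 * C4 * S ≤ C2 * C3 * E := by
    rw [hS, hE, Finset.mul_sum, Finset.mul_sum]
    exact Finset.sum_le_sum (fun p hp => by
      have := hPT p hp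
      calc C1 * C4 * (n - 1).choose (p + t - 1)
          = (c + t - 1).choose t * (b + 3 * t - 1).choose t * (n - 1).choose (p + t - 1) := rfl
        _ ≤ (c + b - a + 3 * t - 1).choose t * (n - 1).choose t *
              (n - t - 1).choose (p - 1) := this
        _ = C2 * C3 * (n - t - 1).choose (p - 1) := rfl)
  have hII : 2 * E ≤ C4 * C'.card := by
    calc 2 * E = ∑ p ∈ Finset.Icc a b, 2 * (n - t - 1).choose (p - 1) := by
          rw [hE, Finset.mul_sum]
      _ ≤ Yfin.card := hlower
      _ ≤ C'.card * C4 := hupper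
      _ = C4 * C'.card := Nat.mul_comm _ _
  have hC4pos : 0 < C4 := Nat.choose_pos (by omega)
  have hC2pos : 0 < C2 := Nat.choose_pos (by omega)
  have hC3pos : 0 < C3 := Nat.choose_pos (by omega)
  have hmain : C1 * 2 * S ≤ C2 * C3 * C'.card := by
    have h1 : (C1 * 2 * S) * C4 ≤ (C2 * C3 * C'.card) * C4 := by
      calc (C1 * 2 * S) * C4 = 2 * (C1 * C4 * S) := by ring
        _ ≤ 2 * (C2 * C3 * E) := Nat.mul_le_mul_left 2 hI
        _ = C2 * C3 * (2 * E) := by ring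
        _ ≤ C2 * C3 * (C4 * C'.card) := Nat.mul_le_mul_left _ hII
        _ = (C2 * C3 * C'.card) * C4 := by ring
    exact Nat.le_of_mul_le_mul_right h1 hC4pos
  -- transfer to the reals
  have hsumcast : ∑ p ∈ Finset.Icc a b, ((n - 1).choose (p + t - 1) : ℝ) = (S : ℝ) := by
    rw [hS]
    push_cast
    rfl
  rw [hsumcast]
  rw [div_mul_div_comm, div_mul_eq_mul_div, div_le_iff₀ (by positivity)]
  have := hmain
  calc (C1 : ℝ) * 2 * (S : ℝ) = ((C1 * 2 * S : ℕ) : ℝ) := by push_cast; ring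
    _ ≤ ((C2 * C3 * C'.card : ℕ) : ℝ) := by exact_mod_cast hmain
    _ = (C'.card : ℝ) * ((C2 : ℝ) * (C3 : ℝ)) := by push_cast; ring
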